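/- For a normalized operator O (Frobenius norm 1) with singular values {γ_l} and Pauli coefficients b_k = 2^{-n/2} Tr(P_k O), for every α ≥ 0 the BBC-Rényi entropy satisfies H_α({|b_k|^2}) ≥ n - 2 log(Σ_l γ_l) = n - H_{1/2}({γ_l^2}). -/

import Mathlib

open scoped ENNReal BigOperators
open Matrix

/-- The α-order Rényi entropy (log base 2). -/
noncomputable def renyiEntropy {ι : Type*} [Fintype ι] (α : ℝ≥0∞) (p : ι → ℝ) : ℝ :=
  if α = 0 then Real.logb 2 (Nat.card {i : ι | p i ≠ 0})
  else if α = 1 then -∑ i, p i * Real.logb 2 (p i)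
  else if α = ⊤ then -(Real.logb 2 (⨆ i, p i))
  else (1 - α.toReal)⁻¹ * Real.logb 2 (∑ i, p i ^ α.toReal)

/-- The four single-qubit Pauli matrices `I, X, Y, Z`. -/
noncomputable def pauli1 (k : Fin 4) : Matrix (Fin 2) (Fin 2) ℂ :=
  if k = 0 then !![1, 0; 0, 1]
  else if k = 1 then !![0, 1; 1, 0]
  else if k = 2 then !![0, -Complex.I; Complex.I, 0]
  else !![1, 0; 0, -1]

/-- The `n`-qubit Pauli operator labelled by a Pauli string. -/
noncomputable def pauliOp (n : ℕ) (P : Fin n → Fin 4) :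
    Matrix (Fin n → Fin 2) (Fin n → Fin 2) ℂ :=
  fun i j => ∏ t, pauli1 (P t) (i t) (j t)

lemma pauli1_complete (a b c d : Fin 2) :
    ∑ k : Fin 4, pauli1 k a b * star (pauli1 k c d)
      = if a = c ∧ b = d then 2 else 0 := by
  fin_cases a <;> fin_cases b <;> fin_cases c <;> fin_cases d <;>
    simp [pauli1, Fin.sum_univ_four, Complex.ext_iff] <;> norm_num

lemma pauli1_unitary (k : Fin 4) (x y : Fin 2) :
    ∑ a : Fin 2, pauli1 k x a * star (pauli1 k y a)
      = if x = y then 1 else 0 := by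
  fin_cases k <;> fin_cases x <;> fin_cases y <;>
    simp [pauli1, Fin.sum_univ_two, Complex.ext_iff]

lemma pauliOp_complete (n : ℕ) (i j k l : Fin n → Fin 2) :
    ∑ P : Fin n → Fin 4, pauliOp n P i j * star (pauliOp n P k l)
      = if i = k ∧ j = l then (2 : ℂ) ^ n else 0 := by
  have : ∀ P : Fin n → Fin 4, pauliOp n P i j * star (pauliOp n P k l)
      = ∏ t, (pauli1 (P t) (i t) (j t) * star (pauli1 (P t) (k t) (l t))) := by
    intro P
    rw [pauliOp, pauliOp, star_prod, ← Finset.prod_mul_distrib]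
  simp_rw [this]
  rw [← Fintype.prod_sum fun t m => pauli1 m (i t) (j t) * star (pauli1 m (k t) (l t))]
  simp_rw [pauli1_complete]
  by_cases h : i = k ∧ j = l
  · simp [h.1, h.2]
  · rw [if_neg h]
    obtain ⟨t, ht⟩ : ∃ t, ¬(i t = k t ∧ j t = l t) := by
      by_contra hc
      push_neg at hc
      exact h ⟨funext fun t => (hc t).1, funext fun t => (hc t).2⟩
    exact Finset.prod_eq_zero (Finset.mem_univ t) (by simp [ht])

lemma pauliOp_orth (n : ℕ) (P : Fin n → Fin 4) (x y : Fin n → Fin 2) :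
    ∑ a : Fin n → Fin 2, pauliOp n P x a * star (pauliOp n P y a)
      = if x = y then 1 else 0 := by
  have : ∀ a : Fin n → Fin 2, pauliOp n P x a * star (pauliOp n P y a)
      = ∏ t, (pauli1 (P t) (x t) (a t) * star (pauli1 (P t) (y t) (a t))) := by
    intro a
    rw [pauliOp, pauliOp, star_prod, ← Finset.prod_mul_distrib]
  simp_rw [this]
  rw [(Fintype.prod_sum fun t m => pauli1 (P t) (x t) m * star (pauli1 (P t) (y t) m)).symm]
  simp_rw [pauli1_unitary]
  by_cases h : x = y
  · simp [h]
  · rw [if_neg h]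
    obtain ⟨t, ht⟩ : ∃ t, x t ≠ y t := by
      by_contra hc
      push_neg at hc
      exact h (funext hc)
    exact Finset.prod_eq_zero (Finset.mem_univ t) (by simp [ht])

lemma parseval_c (n : ℕ) (O : Matrix (Fin n → Fin 2) (Fin n → Fin 2) ℂ) :
    ∑ P : Fin n → Fin 4, (pauliOp n P * O).trace * star ((pauliOp n P * O).trace)
      = (2 : ℂ) ^ n * ∑ i, ∑ j, O i j * star (O i j) := by
  have htr : ∀ P : Fin n → Fin 4, (pauliOp n P * O).trace
      = ∑ p : (Fin n → Fin 2) × (Fin n → Fin 2), pauliOp n P p.1 p.2 * O p.2 p.1 := by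
    intro P
    rw [Matrix.trace, Fintype.sum_prod_type]
    simp [Matrix.diag, Matrix.mul_apply]
  simp_rw [htr, star_sum, Finset.sum_mul_sum, star_mul']
  rw [Finset.sum_comm]
  have key : ∀ p q : (Fin n → Fin 2) × (Fin n → Fin 2),
      ∑ P : Fin n → Fin 4, pauliOp n P p.1 p.2 * O p.2 p.1 * (star (pauliOp n P q.1 q.2) * star (O q.2 q.1))
      = (if p = q then (2:ℂ)^n else 0) * (O p.2 p.1 * star (O q.2 q.1)) := by
    intro p q
    have : ∀ P : Fin n → Fin 4, pauliOp n P p.1 p.2 * O p.2 p.1 * (star (pauliOp n P q.1 q.2) * star (O q.2 q.1))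
        = (pauliOp n P p.1 p.2 * star (pauliOp n P q.1 q.2)) * (O p.2 p.1 * star (O q.2 q.1)) := by
      intro P; ring
    simp_rw [this, ← Finset.sum_mul, pauliOp_complete, Prod.ext_iff]
  refine (Finset.sum_congr rfl fun p _ => Finset.sum_comm).trans ?_
  simp_rw [key, ite_mul, zero_mul, Finset.sum_ite_eq, Finset.mem_univ, if_pos]
  rw [← Finset.mul_sum]
  congr 1
  rw [Fintype.sum_prod_type, Finset.sum_comm]

lemma pauliOp_unitary (n : ℕ) (P : Fin n → Fin 4) :
    pauliOp n P ∈ Matrix.unitaryGroup (Fin n → Fin 2) ℂ := by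
  rw [Matrix.mem_unitaryGroup_iff]
  ext x y
  rw [Matrix.mul_apply]
  simp only [Matrix.star_apply]
  rw [pauliOp_orth]
  simp [Matrix.one_apply]

lemma trace_bound (n : ℕ)
    (R C : Matrix (Fin n → Fin 2) (Fin n → Fin 2) ℂ)
    (hR : R ∈ Matrix.unitaryGroup (Fin n → Fin 2) ℂ)
    (hC : C ∈ Matrix.unitaryGroup (Fin n → Fin 2) ℂ)
    (γ : (Fin n → Fin 2) → ℝ) (hγ : ∀ l, 0 ≤ γ l) (P : Fin n → Fin 4) :
    ‖(pauliOp n P * (R * Matrix.diagonal (fun l => (γ l : ℂ)) * C)).trace‖ ≤ ∑ l, γ l := by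
  have hU : C * pauliOp n P * R ∈ Matrix.unitaryGroup (Fin n → Fin 2) ℂ :=
    mul_mem (mul_mem hC (pauliOp_unitary n P)) hR
  have htr : (pauliOp n P * (R * Matrix.diagonal (fun l => (γ l : ℂ)) * C)).trace
      = ∑ l, (C * pauliOp n P * R) l l * (γ l : ℂ) := by
    rw [show pauliOp n P * (R * Matrix.diagonal (fun l => (γ l : ℂ)) * C)
        = (pauliOp n P * R * Matrix.diagonal (fun l => (γ l : ℂ))) * C by rw [← mul_assoc, ← mul_assoc],
      Matrix.trace_mul_comm]
    rw [show C * (pauliOp n P * R * Matrix.diagonal (fun l => (γ l : ℂ)))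
        = (C * pauliOp n P * R) * Matrix.diagonal (fun l => (γ l : ℂ)) by rw [← mul_assoc, ← mul_assoc]]
    simp [Matrix.trace, Matrix.diag, Matrix.mul_apply, Matrix.diagonal]
  rw [htr]
  calc ‖∑ l, (C * pauliOp n P * R) l l * (γ l : ℂ)‖
      ≤ ∑ l, ‖(C * pauliOp n P * R) l l * (γ l : ℂ)‖ := norm_sum_le _ _
    _ ≤ ∑ l, γ l := by
        apply Finset.sum_le_sum
        intro l _
        rw [norm_mul, Complex.norm_real, Real.norm_of_nonneg (hγ l)]
        calc ‖(C * pauliOp n P * R) l l‖ * γ l ≤ 1 * γ l :=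
              mul_le_mul_of_nonneg_right (entry_norm_bound_of_unitary hU l l) (hγ l)
          _ = γ l := one_mul _

lemma renyi_ge {ι : Type*} [Fintype ι] (p : ι → ℝ) (M : ℝ) (hM : 0 < M)
    (hp : ∀ i, 0 ≤ p i) (hple : ∀ i, p i ≤ M) (hsum : ∑ i, p i = 1) (α : ℝ≥0∞) :
    renyiEntropy α p ≥ -Real.logb 2 M := by
  classical
  obtain ⟨i₀, hi₀⟩ : ∃ i, 0 < p i := by
    by_contra hc
    push_neg at hc
    have : ∑ i, p i ≤ 0 := Finset.sum_nonpos fun i _ => hc i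
    linarith [hsum]
  rw [renyiEntropy]
  have h2 : (1:ℝ) < 2 := one_lt_two
  by_cases h0 : α = 0
  · rw [if_pos h0]
    -- card of support ≥ 1/M
    have hcard : Nat.card {i : ι | p i ≠ 0} = (Finset.univ.filter (fun i => p i ≠ 0)).card := by
      rw [Nat.card_eq_fintype_card]
      exact (Fintype.card_subtype _)
    have hone : (1:ℝ) ≤ (Finset.univ.filter (fun i => p i ≠ 0)).card * M := by
      have : ∑ i ∈ Finset.univ.filter (fun i => p i ≠ 0), p i = 1 := by
        rw [← hsum]
        exact Finset.sum_filter_ne_zero _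
      calc (1:ℝ) = ∑ i ∈ Finset.univ.filter (fun i => p i ≠ 0), p i := this.symm
        _ ≤ ∑ _i ∈ Finset.univ.filter (fun i => p i ≠ 0), M :=
            Finset.sum_le_sum fun i _ => hple i
        _ = (Finset.univ.filter (fun i => p i ≠ 0)).card * M := by
            rw [Finset.sum_const, nsmul_eq_mul]
    have hMinv : M⁻¹ ≤ ((Finset.univ.filter (fun i => p i ≠ 0)).card : ℝ) := by
      rw [inv_le_iff_one_le_mul₀ hM]  -- maybe wrong name
      exact hone
    rw [hcard, ← Real.logb_inv]
    exact Real.logb_le_logb_of_le h2 (inv_pos.mpr hM) hMinv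
  rw [if_neg h0]
  by_cases h1 : α = 1
  · rw [if_pos h1]
    have : ∑ i, p i * Real.logb 2 (p i) ≤ ∑ i, p i * Real.logb 2 M := by
      apply Finset.sum_le_sum
      intro i _
      rcases eq_or_lt_of_le (hp i) with h | h
      · simp [← h]
      · exact mul_le_mul_of_nonneg_left (Real.logb_le_logb_of_le h2 h (hple i)) (hp i)
    have h2' : ∑ i, p i * Real.logb 2 M = Real.logb 2 M := by
      rw [← Finset.sum_mul, hsum, one_mul]
    linarith
  rw [if_neg h1]
  by_cases ht : α = ⊤
  · rw [if_pos ht]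
    have : Nonempty ι := ⟨i₀⟩
    have hbdd : BddAbove (Set.range p) := (Set.finite_range p).bddAbove
    have hsup_le : (⨆ i, p i) ≤ M := ciSup_le fun i => hple i
    have hsup_pos : 0 < ⨆ i, p i := lt_of_lt_of_le hi₀ (le_ciSup hbdd i₀)
    exact neg_le_neg (Real.logb_le_logb_of_le h2 hsup_pos hsup_le)
  rw [if_neg ht]
  set a := α.toReal with ha
  have ha0 : 0 < a := ENNReal.toReal_pos h0 ht
  have ha1 : a ≠ 1 := by
    intro h
    exact h1 (by rw [← ENNReal.ofReal_toReal ht, ← ha, h]; simp)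
  have hlogM : Real.logb 2 (M ^ (a - 1)) = (a - 1) * Real.logb 2 M := by
    rw [Real.logb, Real.log_rpow hM, Real.logb, mul_div_assoc]
  have hne : (1:ℝ) - a ≠ 0 := fun h => ha1 (by linarith)
  have hkey : (1-a)⁻¹ * ((a-1) * Real.logb 2 M) = -Real.logb 2 M := by
    field_simp
    ring
  rcases lt_or_gt_of_ne ha1 with hlt | hgt
  · -- a < 1
    have hterm : ∀ i, p i * M ^ (a - 1) ≤ p i ^ a := by
      intro i
      rcases eq_or_lt_of_le (hp i) with h | h
      · rw [← h, zero_mul, Real.zero_rpow (ne_of_gt ha0)]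
      · have : M ^ (a-1) ≤ p i ^ (a-1) :=
          Real.rpow_le_rpow_of_nonpos h (hple i) (by linarith)
        calc p i * M ^ (a-1) ≤ p i * p i ^ (a-1) :=
              mul_le_mul_of_nonneg_left this (hp i)
          _ = p i ^ a := by
              rw [← Real.rpow_one_add' (hp i) (by intro hh; apply ha1; linarith)]
              ring_nf
    have hsum_ge : M ^ (a-1) ≤ ∑ i, p i ^ a := by
      calc M ^ (a-1) = ∑ i, p i * M ^ (a-1) := by rw [← Finset.sum_mul, hsum, one_mul]
        _ ≤ ∑ i, p i ^ a := Finset.sum_le_sum fun i _ => hterm i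
    have hMa : 0 < M ^ (a-1) := Real.rpow_pos_of_pos hM _
    have hlog_ge : (a - 1) * Real.logb 2 M ≤ Real.logb 2 (∑ i, p i ^ a) := by
      rw [← hlogM]
      exact Real.logb_le_logb_of_le h2 hMa hsum_ge
    have hinv : 0 < (1 - a)⁻¹ := by
      apply inv_pos.mpr; linarith
    calc -Real.logb 2 M = (1-a)⁻¹ * ((a-1) * Real.logb 2 M) := hkey.symm
      _ ≤ (1-a)⁻¹ * Real.logb 2 (∑ i, p i ^ a) :=
          mul_le_mul_of_nonneg_left hlog_ge (le_of_lt hinv)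
  · -- a > 1
    have hterm : ∀ i, p i ^ a ≤ p i * M ^ (a - 1) := by
      intro i
      rcases eq_or_lt_of_le (hp i) with h | h
      · rw [← h, zero_mul, Real.zero_rpow (ne_of_gt ha0)]
      · have : p i ^ (a-1) ≤ M ^ (a-1) :=
          Real.rpow_le_rpow (hp i) (hple i) (by linarith)
        calc p i ^ a = p i * p i ^ (a-1) := by
              rw [← Real.rpow_one_add' (hp i) (by intro hh; apply ha1; linarith)]
              ring_nf
          _ ≤ p i * M ^ (a-1) := mul_le_mul_of_nonneg_left this (hp i)
    have hsum_le : ∑ i, p i ^ a ≤ M ^ (a-1) := by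
      calc ∑ i, p i ^ a ≤ ∑ i, p i * M ^ (a-1) := Finset.sum_le_sum fun i _ => hterm i
        _ = M ^ (a-1) := by rw [← Finset.sum_mul, hsum, one_mul]
    have hpos : 0 < ∑ i, p i ^ a :=
      Finset.sum_pos' (fun i _ => Real.rpow_nonneg (hp i) a)
        ⟨i₀, Finset.mem_univ i₀, Real.rpow_pos_of_pos hi₀ a⟩
    have hlog_le : Real.logb 2 (∑ i, p i ^ a) ≤ (a - 1) * Real.logb 2 M := by
      rw [← hlogM]
      exact Real.logb_le_logb_of_le h2 hpos hsum_le
    have hinv : (1 - a)⁻¹ < 0 := by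
      apply inv_lt_zero.mpr; linarith
    calc -Real.logb 2 M = (1-a)⁻¹ * ((a-1) * Real.logb 2 M) := hkey.symm
      _ ≤ (1-a)⁻¹ * Real.logb 2 (∑ i, p i ^ a) :=
          mul_le_mul_of_nonpos_left hlog_le (le_of_lt hinv)

/-- BBC lower bound from TE: for a Frobenius-norm-1 operator `O = R Σ C` (SVD with
singular values `γ`, `∑ γ² = 1`) and Pauli coefficients `b_P = 2^{-n/2} Tr(P O)`,
for every `α ≥ 0` the BBC-Rényi entropy satisfies
`H_α({|b_P|²}) ≥ n - 2 log₂(∑ γ_l) = n - H_{1/2}({γ_l²})`. -/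
theorem bbc_lower_bound (n : ℕ)
    (O R C : Matrix (Fin n → Fin 2) (Fin n → Fin 2) ℂ)
    (hR : R ∈ Matrix.unitaryGroup (Fin n → Fin 2) ℂ)
    (hC : C ∈ Matrix.unitaryGroup (Fin n → Fin 2) ℂ)
    (γ : (Fin n → Fin 2) → ℝ)
    (hO : O = R * Matrix.diagonal (fun l => (γ l : ℂ)) * C)
    (hFro : ∑ i, ∑ j, ‖O i j‖ ^ 2 = 1)
    (hγ : ∀ l, 0 ≤ γ l) (hγs : ∑ l, γ l ^ 2 = 1) :
    (∀ α : ℝ≥0∞,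
      renyiEntropy α
          (fun P : Fin n → Fin 4 =>
            ‖(((2 : ℝ) ^ (-(n : ℝ) / 2) : ℝ) : ℂ) * (pauliOp n P * O).trace‖ ^ 2)
        ≥ n - 2 * Real.logb 2 (∑ l, γ l)) ∧
    renyiEntropy (1 / 2) (fun l => γ l ^ 2) = 2 * Real.logb 2 (∑ l, γ l) := by

  classical
  -- positivity of ∑ γ
  have hγpos : 0 < ∑ l, γ l := by
    obtain ⟨l₀, hl₀⟩ : ∃ l, γ l ≠ 0 := by
      by_contra hc
      push_neg at hc
      simp [hc] at hγs
    have h0 : 0 < γ l₀ := lt_of_le_of_ne (hγ l₀) (Ne.symm hl₀)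
    exact Finset.sum_pos' (fun l _ => hγ l) ⟨l₀, Finset.mem_univ l₀, h0⟩
  set M : ℝ := (2:ℝ) ^ (-(n:ℝ)) * (∑ l, γ l) ^ 2 with hMdef
  have hMpos : 0 < M := mul_pos (Real.rpow_pos_of_pos two_pos _) (pow_pos hγpos 2)
  have hc2 : ((2:ℝ) ^ (-(n:ℝ)/2)) ^ 2 = (2:ℝ) ^ (-(n:ℝ)) := by
    rw [← Real.rpow_natCast ((2:ℝ) ^ (-(n:ℝ)/2)) 2, ← Real.rpow_mul (by norm_num : (0:ℝ) ≤ 2)]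
    norm_num
  have hp_def : ∀ P : Fin n → Fin 4,
      ‖(((2 : ℝ) ^ (-(n : ℝ) / 2) : ℝ) : ℂ) * (pauliOp n P * O).trace‖ ^ 2
        = (2:ℝ) ^ (-(n:ℝ)) * ‖(pauliOp n P * O).trace‖ ^ 2 := by
    intro P
    rw [norm_mul, mul_pow, Complex.norm_real,
      Real.norm_of_nonneg (le_of_lt (Real.rpow_pos_of_pos two_pos _)), hc2]
  -- Parseval (real form)
  have hreal : ∑ P : Fin n → Fin 4, ‖(pauliOp n P * O).trace‖ ^ 2 = (2:ℝ) ^ n := by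
    have hC := parseval_c n O
    have hms : ∀ z : ℂ, z * star z = ((‖z‖ ^ 2 : ℝ) : ℂ) := by
      intro z
      rw [Complex.star_def, Complex.mul_conj]
      norm_cast
      rw [← Complex.sq_norm]
    simp_rw [hms] at hC
    have : ∑ i, ∑ j, ((‖O i j‖ ^ 2 : ℝ) : ℂ) = ((1:ℝ) : ℂ) := by
      push_cast
      exact_mod_cast congrArg (fun x : ℝ => (x : ℂ)) hFro
    rw [this] at hC
    norm_num at hC
    exact_mod_cast hC
  have hsum : ∑ P : Fin n → Fin 4,
      ‖(((2 : ℝ) ^ (-(n : ℝ) / 2) : ℝ) : ℂ) * (pauliOp n P * O).trace‖ ^ 2 = 1 := by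
    simp_rw [hp_def]
    rw [← Finset.mul_sum, hreal, ← Real.rpow_natCast (2:ℝ) n,
      ← Real.rpow_add two_pos]
    norm_num
  have hple : ∀ P : Fin n → Fin 4,
      ‖(((2 : ℝ) ^ (-(n : ℝ) / 2) : ℝ) : ℂ) * (pauliOp n P * O).trace‖ ^ 2 ≤ M := by
    intro P
    rw [hp_def, hMdef]
    apply mul_le_mul_of_nonneg_left _ (le_of_lt (Real.rpow_pos_of_pos two_pos _))
    have hb : ‖(pauliOp n P * O).trace‖ ≤ ∑ l, γ l := by
      rw [hO]
      exact trace_bound n R C hR hC γ hγ P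
    exact pow_le_pow_left₀ (norm_nonneg _) hb 2
  have hp0 : ∀ P : Fin n → Fin 4,
      0 ≤ ‖(((2 : ℝ) ^ (-(n : ℝ) / 2) : ℝ) : ℂ) * (pauliOp n P * O).trace‖ ^ 2 :=
    fun P => sq_nonneg _
  have hlogM : -Real.logb 2 M = (n:ℝ) - 2 * Real.logb 2 (∑ l, γ l) := by
    rw [hMdef, Real.logb_mul (ne_of_gt (Real.rpow_pos_of_pos two_pos _))
        (ne_of_gt (pow_pos hγpos 2)),
      Real.logb_rpow two_pos (by norm_num), Real.logb_pow]
    push_cast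
    ring
  constructor
  · intro α
    have := renyi_ge
      (fun P : Fin n → Fin 4 =>
        ‖(((2 : ℝ) ^ (-(n : ℝ) / 2) : ℝ) : ℂ) * (pauliOp n P * O).trace‖ ^ 2)
      M hMpos hp0 hple hsum α
    rw [hlogM] at this
    exact this
  · have h0 : (1/2 : ℝ≥0∞) ≠ 0 := by norm_num
    have h1 : (1/2 : ℝ≥0∞) ≠ 1 := by norm_num
    have ht : (1/2 : ℝ≥0∞) ≠ ⊤ := by norm_num
    rw [renyiEntropy, if_neg h0, if_neg h1, if_neg ht]
    have htr : (1/2 : ℝ≥0∞).toReal = 1/2 := by simp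
    rw [htr]
    have hid : ∀ l, ((γ l) ^ 2) ^ ((1:ℝ)/2) = γ l := by
      intro l
      rw [← Real.rpow_natCast (γ l) 2, ← Real.rpow_mul (hγ l)]
      norm_num
    simp_rw [hid]
    norm_num
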